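/- arXiv:1606.07729 — 3 statements merged into one kernel-verified Lean document; each statement's English description precedes it below -/
import Mathlib

section
/- For a unitary N×N complex matrix A and any positive integer delays m_1,...,m_N, every root z of the polynomial p(z) = det(D(z^{-1}) − A), where D(z^{-1}) = diag(z^{m_1},...,z^{m_N}), has absolute value 1. -/
open Matrix

/-- Every root of `det(diag(z^{m_1},...,z^{m_N}) - A)` for a unitary matrix `A`
and positive integer delays `m` is unimodular. -/
theorem unitary_is_unilossless {N : ℕ} (A : Matrix (Fin N) (Fin N) ℂ)
    (hA : A * A.conjTranspose = 1)
    (m : Fin N → ℕ) (hm : ∀ i, 1 ≤ m i) (z : ℂ)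
    (hz : (Matrix.diagonal (fun i => z ^ m i) - A).det = 0) :
    ‖z‖ = 1 := by
  obtain ⟨v, hv, hDv⟩ := (Matrix.exists_mulVec_eq_zero_iff).mpr hz
  have h1 : A.conjTranspose * A = 1 := mul_eq_one_comm.mp hA
  have hDA : (Matrix.diagonal fun i => z ^ m i) *ᵥ v = A *ᵥ v := by
    rwa [Matrix.sub_mulVec, sub_eq_zero] at hDv
  have hnorm : star (A *ᵥ v) ⬝ᵥ (A *ᵥ v) = star v ⬝ᵥ v := by
    rw [Matrix.star_mulVec, Matrix.dotProduct_mulVec, Matrix.vecMul_vecMul, h1,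
      Matrix.vecMul_one]
  have hkey : star ((Matrix.diagonal fun i => z ^ m i) *ᵥ v)
      ⬝ᵥ ((Matrix.diagonal fun i => z ^ m i) *ᵥ v) = star v ⬝ᵥ v := by
    rw [hDA]; exact hnorm
  have hstar : ∀ w : ℂ, star w * w = (Complex.normSq w : ℂ) := fun w => by
    rw [Complex.normSq_eq_conj_mul_self, Complex.star_def]
  simp only [dotProduct, Pi.star_apply, Matrix.mulVec_diagonal, hstar] at hkey
  have hC : ((∑ i, Complex.normSq (z ^ m i * v i) : ℝ) : ℂ)
      = ((∑ i, Complex.normSq (v i) : ℝ) : ℂ) := by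
    push_cast; exact hkey
  have hR : ∑ i, Complex.normSq z ^ m i * Complex.normSq (v i)
      = ∑ i, Complex.normSq (v i) := by
    have h3 := Complex.ofReal_injective hC
    simpa [_root_.map_mul, _root_.map_pow] using h3
  obtain ⟨j, hj⟩ := Function.ne_iff.mp hv
  have hj' : 0 < Complex.normSq (v j) := Complex.normSq_pos.mpr hj
  have h0 : 0 ≤ Complex.normSq z := Complex.normSq_nonneg z
  have hr1 : Complex.normSq z = 1 := by
    rcases lt_trichotomy (Complex.normSq z) 1 with h | h | h
    · exfalso
      have hlt : ∑ i, Complex.normSq z ^ m i * Complex.normSq (v i)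
          < ∑ i, Complex.normSq (v i) := by
        refine Finset.sum_lt_sum (fun i _ => ?_) ⟨j, Finset.mem_univ j, ?_⟩
        · have : Complex.normSq z ^ m i ≤ 1 := pow_le_one₀ h0 h.le
          nlinarith [Complex.normSq_nonneg (v i)]
        · have : Complex.normSq z ^ m j < 1 :=
            pow_lt_one₀ h0 h (Nat.one_le_iff_ne_zero.mp (hm j))
          nlinarith
      linarith
    · exact h
    · exfalso
      have hlt : ∑ i, Complex.normSq (v i)
          < ∑ i, Complex.normSq z ^ m i * Complex.normSq (v i) := by
        refine Finset.sum_lt_sum (fun i _ => ?_) ⟨j, Finset.mem_univ j, ?_⟩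
        · have : 1 ≤ Complex.normSq z ^ m i := one_le_pow₀ h.le
          nlinarith [Complex.normSq_nonneg (v i)]
        · have : 1 < Complex.normSq z ^ m j :=
            one_lt_pow₀ h (Nat.one_le_iff_ne_zero.mp (hm j))
          nlinarith
      linarith
  rw [Complex.norm_def, hr1, Real.sqrt_one]
end

section
/- (Cohn's theorem) All zeros of a complex polynomial p lie on the unit circle if and only if p is self-inversive and all zeros of its derivative p' lie in the closed unit disk. -/
open Polynomial

private lemma eval_map_conj (q : Polynomial ℂ) (z : ℂ) :
    (q.map (starRingEnd ℂ)).eval z = (starRingEnd ℂ) (q.eval ((starRingEnd ℂ) z)) := by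
  conv_lhs => rw [show z = (starRingEnd ℂ) ((starRingEnd ℂ) z) by simp]
  rw [eval_map, eval₂_at_apply]

private lemma reflect_one_X_sub_C (z : ℂ) :
    reflect 1 (X - C z) = 1 - C z * X := by
  ext i
  rw [coeff_reflect]
  match i with
  | 0 => simp [revAt_le]
  | 1 => simp [revAt_le, coeff_one]
  | (n+2) => rw [revAt_eq_self_of_lt (by omega)]; simp [coeff_X, coeff_one]

private lemma natDeg_prod_le (Z : Multiset ℂ) :
    ((Z.map fun z => X - C z).prod).natDegree ≤ Z.card := by
  refine le_trans (natDegree_multiset_prod_le _) ?_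
  rw [Multiset.map_map]
  simp [Function.comp_def]

private lemma reflect_prod (Z : Multiset ℂ) :
    reflect Z.card ((Z.map fun z => X - C z).prod) = (Z.map fun z => 1 - C z * X).prod := by
  induction Z using Multiset.induction with
  | empty => simp [show reflect 0 (1 : Polynomial ℂ) = 1 by rw [show (1:Polynomial ℂ) = C 1 from (map_one C).symm, reflect_C]; simp]
  | cons a Z ih =>
    simp only [Multiset.map_cons, Multiset.prod_cons, Multiset.card_cons]
    rw [show Z.card + 1 = 1 + Z.card from by ring,
      reflect_mul _ _ (by simp) (natDeg_prod_le Z), ih, reflect_one_X_sub_C]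

private lemma eval_reflect {q : Polynomial ℂ} {N : ℕ} (hq : q.natDegree ≤ N) {z : ℂ}
    (hz : z ≠ 0) : (reflect N q).eval z = z ^ N * q.eval z⁻¹ := by
  have h1 : (reflect N q).natDegree < N + 1 := by
    refine Nat.lt_succ_of_le (natDegree_le_iff_coeff_eq_zero.mpr fun i hi => ?_)
    rw [coeff_reflect, revAt_eq_self_of_lt hi]
    exact coeff_eq_zero_of_natDegree_lt (lt_of_le_of_lt hq hi)
  rw [eval_eq_sum_range' h1, eval_eq_sum_range' (Nat.lt_succ_of_le hq), Finset.mul_sum,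
    ← Finset.sum_range_reflect]
  refine Finset.sum_congr rfl fun i hi => ?_
  rw [Finset.mem_range] at hi
  rw [show N + 1 - 1 - i = N - i from by omega, coeff_reflect,
    revAt_le (by omega : N - i ≤ N), show N - (N - i) = i from by omega]
  have hzn : z ^ N = z ^ (N - i) * z ^ i := by
    rw [← pow_add, show N - i + i = N from by omega]
  rw [hzn]
  field_simp
  rw [mul_assoc, ← mul_pow, mul_one_div_cancel hz, one_pow, mul_one]

private lemma coeff_X_mul_derivative (p : Polynomial ℂ) (j : ℕ) :
    (X * derivative p).coeff j = p.coeff j * j := by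
  cases j with
  | zero => simp
  | succ k => rw [coeff_X_mul, coeff_derivative]; push_cast; ring

private lemma reflect_self_eq {p : Polynomial ℂ} {ε : ℂ}
    (hε : ∀ j ≤ p.natDegree, p.coeff (p.natDegree - j) = ε * (starRingEnd ℂ) (p.coeff j)) :
    reflect p.natDegree p = C ε * p.map (starRingEnd ℂ) := by
  ext j
  rw [coeff_reflect, coeff_C_mul, coeff_map]
  rcases le_or_gt j p.natDegree with hj | hj
  · rw [revAt_le hj]; exact hε j hj
  · rw [revAt_eq_self_of_lt hj, coeff_eq_zero_of_natDegree_lt hj]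
    simp

private lemma key_identity {p : Polynomial ℂ} {ε : ℂ} (hp : 0 < p.natDegree)
    (hε : ∀ j ≤ p.natDegree, p.coeff (p.natDegree - j) = ε * (starRingEnd ℂ) (p.coeff j)) :
    reflect (p.natDegree - 1) (derivative p) =
      C ε * ((C (p.natDegree : ℂ) * p - X * derivative p).map (starRingEnd ℂ)) := by
  set n := p.natDegree with hn
  ext j
  rw [coeff_reflect, coeff_C_mul, coeff_map, coeff_sub, coeff_C_mul, coeff_X_mul_derivative]
  rcases le_or_gt j (n - 1) with hj | hj
  · rw [revAt_le hj, coeff_derivative, show n - 1 - j + 1 = n - j from by omega,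
      hε j (by omega), map_sub, map_mul, map_mul, map_natCast, map_natCast]
    push_cast [Nat.cast_sub (show j ≤ n - 1 from hj), Nat.cast_sub (show 1 ≤ n from hp),
      Nat.cast_sub (show j ≤ n from by omega)]
    ring
  · rw [revAt_eq_self_of_lt hj, coeff_derivative,
      coeff_eq_zero_of_natDegree_lt (show n < j + 1 from by omega)]
    have h0 : (n : ℂ) * p.coeff j - p.coeff j * j = 0 := by
      rcases eq_or_lt_of_le (show n ≤ j from by omega) with h | h
      · rw [← h]; ring
      · rw [coeff_eq_zero_of_natDegree_lt h]; ring
    rw [h0]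
    simp

private lemma norm_mprod (s : Multiset ℂ) : ‖s.prod‖ = (s.map (‖·‖)).prod :=
  map_multiset_prod (normHom : ℂ →*₀ ℝ) s

private lemma abs_factor {z w : ℂ} (hz : ‖z‖ ≤ 1) (hw : 1 ≤ ‖w‖) :
    ‖1 - z * (starRingEnd ℂ) w‖ ≤ ‖w - z‖ := by
  have h1 : Complex.normSq z ≤ 1 := by
    rw [Complex.normSq_eq_norm_sq]; nlinarith [norm_nonneg z]
  have h2 : 1 ≤ Complex.normSq w := by
    rw [Complex.normSq_eq_norm_sq]; nlinarith [norm_nonneg w]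
  rw [Complex.norm_def, Complex.norm_def]
  apply Real.sqrt_le_sqrt
  rw [Complex.normSq_apply, Complex.normSq_apply] at *
  simp only [Complex.sub_re, Complex.sub_im, Complex.one_re, Complex.one_im, Complex.mul_re,
    Complex.mul_im, Complex.conj_re, Complex.conj_im] at *
  nlinarith [mul_nonneg (sub_nonneg.2 h2) (sub_nonneg.2 h1)]

private lemma prod_abs_le {w : ℂ} (hw : 1 ≤ ‖w‖) (W : Multiset ℂ)
    (hW : ∀ z ∈ W, ‖z‖ ≤ 1) :
    (W.map fun z => ‖1 - z * (starRingEnd ℂ) w‖).prod ≤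
      (W.map fun z => ‖w - z‖).prod := by
  induction W using Multiset.induction with
  | empty => simp
  | cons a W ih =>
    simp only [Multiset.map_cons, Multiset.prod_cons]
    have hnn : 0 ≤ (W.map fun z => ‖1 - z * (starRingEnd ℂ) w‖).prod :=
      Multiset.prod_induction _ _ (fun _ _ => mul_nonneg) (by norm_num)
        (by intro x hx; obtain ⟨z, _, rfl⟩ := Multiset.mem_map.1 hx; exact norm_nonneg _)
    exact mul_le_mul (abs_factor (hW a (Multiset.mem_cons_self a W)) hw)
      (ih fun z hz => hW z (Multiset.mem_cons_of_mem hz)) hnn (norm_nonneg _)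

private lemma term_re_pos {w z : ℂ} (hz : ‖z‖ ≤ 1) (hw : 1 < ‖w‖) :
    0 < ((w - z)⁻¹ * w).re := by
  have h1 : Complex.normSq z ≤ 1 := by
    rw [Complex.normSq_eq_norm_sq]; nlinarith [norm_nonneg z]
  have h2 : 1 < Complex.normSq w := by
    rw [Complex.normSq_eq_norm_sq]; nlinarith [norm_nonneg w]
  have hne : w - z ≠ 0 := by
    intro h
    rw [sub_eq_zero] at h
    rw [h] at hw
    linarith
  rw [show (w - z)⁻¹ * w = w / (w - z) from by field_simp, Complex.div_re]
  rw [Complex.normSq_apply] at *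
  have hpos : 0 < Complex.normSq (w - z) := Complex.normSq_pos.2 hne
  rw [← add_div]
  apply div_pos ?_ hpos
  simp only [Complex.sub_re, Complex.sub_im]
  nlinarith [sq_nonneg (w.re - z.re), sq_nonneg (w.im - z.im)]

private lemma sum_re_nonneg {w : ℂ} (hw : 1 < ‖w‖) :
    ∀ (Z : Multiset ℂ), (∀ z ∈ Z, ‖z‖ = 1) →
      0 ≤ (((Z.map fun z => (w - z)⁻¹).sum) * w).re := by
  intro Z
  induction Z using Multiset.induction with
  | empty => simp
  | cons a Z ih =>
    intro h
    simp only [Multiset.map_cons, Multiset.sum_cons, add_mul, Complex.add_re]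
    have h1 := term_re_pos (le_of_eq (h a (Multiset.mem_cons_self a Z))) hw
    have h2 := ih fun z hz => h z (Multiset.mem_cons_of_mem hz)
    linarith

private lemma deriv_prod_eval (w : ℂ) :
    ∀ (Z : Multiset ℂ), (∀ z ∈ Z, w - z ≠ 0) →
      (derivative (Z.map fun z => X - C z).prod).eval w =
        ((Z.map fun z => (w - z)⁻¹).sum) * ((Z.map fun z => X - C z).prod).eval w := by
  intro Z
  induction Z using Multiset.induction with
  | empty => simp
  | cons a Z ih =>
    intro h
    simp only [Multiset.map_cons, Multiset.prod_cons, Multiset.sum_cons, derivative_mul,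
      derivative_sub, derivative_X, derivative_C, eval_add, eval_mul, eval_sub, eval_X, eval_C,
      sub_zero, one_mul, eval_one]
    rw [ih (fun z hz => h z (Multiset.mem_cons_of_mem hz))]
    have hne := h a (Multiset.mem_cons_self a Z)
    field_simp

private lemma deriv_root_in_disk {p : Polynomial ℂ} (hp : 0 < p.natDegree)
    (h : ∀ z : ℂ, p.IsRoot z → ‖z‖ = 1) {w : ℂ}
    (hw : p.derivative.IsRoot w) : ‖w‖ ≤ 1 := by
  by_contra hgt
  push_neg at hgt
  have hp0 : p ≠ 0 := fun h0 => by simp [h0] at hp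
  have hsplit := IsAlgClosed.splits p
  have hpeq := hsplit.eq_prod_roots
  have hroots : ∀ z ∈ p.roots, ‖z‖ = 1 := fun z hz =>
    h z ((mem_roots hp0).1 hz)
  have hcard : p.roots.card = p.natDegree := (splits_iff_card_roots).1 hsplit
  have hZ0 : p.roots ≠ 0 := by
    intro h0; rw [h0] at hcard; simp at hcard; omega
  have hne : ∀ z ∈ p.roots, w - z ≠ 0 := by
    intro z hz hsub
    rw [sub_eq_zero] at hsub; rw [hsub, hroots z hz] at hgt; linarith
  have hdp : derivative p =
      C p.leadingCoeff * derivative ((p.roots.map fun z => X - C z).prod) := by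
    conv_lhs => rw [hpeq]
    rw [derivative_C_mul]
  have hev : eval w (derivative p) = 0 := hw
  rw [hdp, eval_mul, eval_C, deriv_prod_eval w p.roots hne] at hev
  have hlc : p.leadingCoeff ≠ 0 := leadingCoeff_ne_zero.2 hp0
  have hprodne : ((p.roots.map fun z => X - C z).prod).eval w ≠ 0 := by
    rw [eval_multiset_prod, Multiset.map_map]
    intro h0
    rw [Multiset.prod_eq_zero_iff] at h0
    obtain ⟨z, hz, hz0⟩ := Multiset.mem_map.1 h0
    exact hne z hz (by simpa using hz0)
  have hS : (p.roots.map fun z => (w - z)⁻¹).sum = 0 := by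
    rcases mul_eq_zero.1 hev.symm.symm with h1 | h1
    · exact absurd h1 hlc
    · rcases mul_eq_zero.1 h1 with h2 | h2
      · exact h2
      · exact absurd h2 hprodne
  obtain ⟨a, ha⟩ := Multiset.exists_mem_of_ne_zero hZ0
  have hpos : 0 < ((((a ::ₘ (p.roots.erase a)).map fun z => (w - z)⁻¹).sum) * w).re := by
    rw [Multiset.map_cons, Multiset.sum_cons, add_mul, Complex.add_re]
    have h1 := term_re_pos (le_of_eq (hroots a ha)) hgt
    have h2 := sum_re_nonneg hgt (p.roots.erase a)
      (fun z hz => hroots z (Multiset.mem_of_mem_erase hz))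
    linarith
  rw [Multiset.cons_erase ha, hS] at hpos
  simp at hpos

private lemma self_inversive_of_roots {p : Polynomial ℂ} (hp : 0 < p.natDegree)
    (h : ∀ z : ℂ, p.IsRoot z → ‖z‖ = 1) :
    ∃ ε : ℂ, ∀ j ≤ p.natDegree,
      p.coeff (p.natDegree - j) = ε * (starRingEnd ℂ) (p.coeff j) := by
  have hp0 : p ≠ 0 := fun h0 => by simp [h0] at hp
  have hsplit := IsAlgClosed.splits p
  have hpeq := hsplit.eq_prod_roots
  have hroots : ∀ z ∈ p.roots, ‖z‖ = 1 := fun z hz => h z ((mem_roots hp0).1 hz)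
  have hcard : p.roots.card = p.natDegree := (splits_iff_card_roots).1 hsplit
  set c := p.leadingCoeff with hc
  have hlc : c ≠ 0 := leadingCoeff_ne_zero.2 hp0
  set m := (p.roots.map fun z => -z).prod with hm
  set ε := c * m * ((starRingEnd ℂ) c)⁻¹ with hε
  -- reflect identity
  have hfac : (p.roots.map fun z => (1 : Polynomial ℂ) - C z * X) =
      (p.roots.map fun z => C (-z) * (X - C ((starRingEnd ℂ) z))) := by
    refine Multiset.map_congr rfl fun z hz => ?_
    have h1 : z * (starRingEnd ℂ) z = 1 := by
      rw [Complex.mul_conj, Complex.normSq_eq_norm_sq, hroots z hz]; norm_num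
    rw [mul_sub, ← C_mul, neg_mul, h1, map_neg, map_neg, map_one]
    ring
  have hCm : (p.roots.map fun z => C (-z)).prod = C m := by
    rw [hm, map_multiset_prod (C : ℂ →+* Polynomial ℂ), Multiset.map_map]
    simp [Function.comp_def]
  have hrefl : reflect p.natDegree p =
      C (c * m) * (p.roots.map fun z => X - C ((starRingEnd ℂ) z)).prod := by
    have h1 : reflect p.natDegree p =
        reflect p.natDegree (C c * (p.roots.map fun z => X - C z).prod) := by rw [← hpeq]
    rw [h1, reflect_C_mul, ← hcard, reflect_prod, hfac, Multiset.prod_map_mul, hCm, ← mul_assoc,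
      ← C_mul]
  have hmap : p.map (starRingEnd ℂ) =
      C ((starRingEnd ℂ) c) * (p.roots.map fun z => X - C ((starRingEnd ℂ) z)).prod := by
    have h1 : p.map (starRingEnd ℂ) =
        (C c * (p.roots.map fun z => X - C z).prod).map (starRingEnd ℂ) := by rw [← hpeq]
    rw [h1]
    rw [Polynomial.map_mul, map_C, Polynomial.map_multiset_prod, Multiset.map_map]
    congr 1
    refine congrArg _ (Multiset.map_congr rfl fun z hz => ?_)
    simp
  have hrev : reflect p.natDegree p = C ε * p.map (starRingEnd ℂ) := by
    have hlc' : (starRingEnd ℂ) c ≠ 0 := by simpa using hlc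
    rw [hrefl, hmap, ← mul_assoc, ← C_mul, hε]
    congr 2
    rw [mul_assoc, inv_mul_cancel₀ hlc', mul_one]
  refine ⟨ε, fun j hj => ?_⟩
  have := congrArg (fun q => coeff q j) hrev
  simpa [coeff_reflect, revAt_le hj, coeff_C_mul, coeff_map] using this

private lemma eps_unimodular {p : Polynomial ℂ} {ε : ℂ} (_hp : 0 < p.natDegree) (hp0 : p ≠ 0)
    (hε : ∀ j ≤ p.natDegree, p.coeff (p.natDegree - j) = ε * (starRingEnd ℂ) (p.coeff j)) :
    ‖ε‖ = 1 := by
  have hcn : p.coeff p.natDegree ≠ 0 := by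
    rw [coeff_natDegree]; exact leadingCoeff_ne_zero.2 hp0
  have h1 : p.coeff p.natDegree = ε * (starRingEnd ℂ) (p.coeff 0) := by
    simpa using hε 0 (Nat.zero_le _)
  have h2 : p.coeff 0 = ε * (starRingEnd ℂ) (p.coeff p.natDegree) := by
    simpa using hε p.natDegree le_rfl
  rw [h2] at h1
  rw [map_mul] at h1
  have h3 : ε * (starRingEnd ℂ) ε = 1 := by
    rw [Complex.conj_conj] at h1
    have h5 : (ε * (starRingEnd ℂ) ε - 1) * p.coeff p.natDegree = 0 := by
      linear_combination -h1
    rcases mul_eq_zero.1 h5 with h6 | h6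
    · exact sub_eq_zero.1 h6
    · exact absurd h6 hcn
  have h4 : Complex.normSq ε = 1 := by
    have := congrArg Complex.re (Complex.mul_conj ε ▸ h3)
    simpa using this
  have := Complex.sq_norm ε
  nlinarith [norm_nonneg ε]

private lemma no_root_outside {p : Polynomial ℂ} (hp : 0 < p.natDegree) {ε : ℂ}
    (hε : ∀ j ≤ p.natDegree, p.coeff (p.natDegree - j) = ε * (starRingEnd ℂ) (p.coeff j))
    (hd : ∀ z : ℂ, p.derivative.IsRoot z → ‖z‖ ≤ 1)
    {w : ℂ} (hw : p.IsRoot w) : ‖w‖ ≤ 1 := by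
  by_contra hgt
  push_neg at hgt
  have hp0 : p ≠ 0 := fun h0 => by simp [h0] at hp
  set n := p.natDegree with hn
  set f := derivative p with hf
  have hf0 : f ≠ 0 := by
    intro h0
    exact absurd (natDegree_eq_zero_of_derivative_eq_zero h0) (by omega)
  have hfd : f.natDegree = n - 1 := by
    refine le_antisymm (natDegree_derivative_le p) (le_natDegree_of_ne_zero ?_)
    rw [hf, coeff_derivative, show n - 1 + 1 = n from by omega]
    have : p.coeff n ≠ 0 := by rw [hn, coeff_natDegree]; exact leadingCoeff_ne_zero.2 hp0
    intro hcontra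
    rcases mul_eq_zero.1 hcontra with h1 | h1
    · exact this h1
    · have h7 : ((n - 1 : ℕ) : ℂ) + 1 = ((n : ℕ) : ℂ) := by
        rw [show ((n - 1 : ℕ) : ℂ) + 1 = ((n - 1 + 1 : ℕ) : ℂ) from by push_cast; ring,
          show n - 1 + 1 = n from by omega]
      rw [h7] at h1
      exact (Nat.cast_ne_zero (R := ℂ)).2 (by omega) h1
  have hsplit := IsAlgClosed.splits f
  have hfeq := hsplit.eq_prod_roots
  have hcard : f.roots.card = n - 1 := ((splits_iff_card_roots).1 hsplit).trans hfd
  have hWdisk : ∀ z ∈ f.roots, ‖z‖ ≤ 1 := fun z hz => hd z ((mem_roots hf0).1 hz)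
  -- reflect identity for f
  have hrefl : reflect (n - 1) f =
      C f.leadingCoeff * (f.roots.map fun z => 1 - C z * X).prod := by
    have h1 : reflect (n - 1) f =
        reflect (n - 1) (C f.leadingCoeff * (f.roots.map fun z => X - C z).prod) := by
      rw [← hfeq]
    rw [h1, reflect_C_mul, ← hcard, reflect_prod]
  -- evaluate key identity at conj w
  have hkey := key_identity hp hε
  rw [← hn, ← hf, hrefl] at hkey
  have heval := congrArg (eval ((starRingEnd ℂ) w)) hkey
  simp only [eval_mul, eval_C] at heval
  rw [eval_map_conj, Complex.conj_conj] at heval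
  have hgw : (C (n : ℂ) * p - X * f).eval w = -(w * f.eval w) := by
    have : p.eval w = 0 := hw
    simp [this]
  rw [hgw] at heval
  -- LHS of heval
  have hlhs : ((f.roots.map fun z => 1 - C z * X).prod).eval ((starRingEnd ℂ) w) =
      ((f.roots.map fun z => 1 - z * (starRingEnd ℂ) w).prod) := by
    rw [eval_multiset_prod, Multiset.map_map]
    congr 1
    refine Multiset.map_congr rfl fun z hz => ?_
    simp
  rw [hlhs] at heval
  -- take absolute values
  have hεabs : ‖ε‖ = 1 := eps_unimodular (hn ▸ hp) hp0 (hn ▸ hε)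
  have habs := congrArg (‖·‖) heval
  simp only [norm_mul, norm_neg, Complex.norm_conj, hεabs, one_mul] at habs
  -- product of abs
  have hprod : ‖(f.roots.map fun z => 1 - z * (starRingEnd ℂ) w).prod‖ =
      (f.roots.map fun z => ‖1 - z * (starRingEnd ℂ) w‖).prod := by
    rw [norm_mprod, Multiset.map_map]
    rfl
  have hfw : ‖f.eval w‖ =
      ‖f.leadingCoeff‖ * (f.roots.map fun z => ‖w - z‖).prod := by
    conv_lhs => rw [hfeq]
    rw [eval_mul, eval_C, norm_mul, eval_multiset_prod, Multiset.map_map,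
      norm_mprod, Multiset.map_map]
    congr 2
    refine Multiset.map_congr rfl fun z hz => ?_
    simp
  rw [hprod] at habs
  have hle := prod_abs_le (le_of_lt hgt) f.roots hWdisk
  have hnnlc : 0 ≤ ‖f.leadingCoeff‖ := norm_nonneg _
  have hchain : ‖w‖ * ‖f.eval w‖ ≤ ‖f.eval w‖ := by
    rw [← habs, hfw]
    calc ‖f.leadingCoeff‖ *
          (f.roots.map fun z => ‖1 - z * (starRingEnd ℂ) w‖).prod
        ≤ ‖f.leadingCoeff‖ * (f.roots.map fun z => ‖w - z‖).prod :=
          mul_le_mul_of_nonneg_left hle hnnlc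
      _ = _ := rfl
  have hfweval : f.eval w = 0 := by
    by_contra hne
    have h0 : 0 < ‖f.eval w‖ := by
      have := norm_nonneg (f.eval w)
      rcases lt_or_eq_of_le this with h | h
      · exact h
      · exact absurd (norm_eq_zero.1 h.symm) hne
    nlinarith
  exact absurd (hd w hfweval) (by linarith)

private lemma root_recip {p : Polynomial ℂ} {ε : ℂ}
    (hε : ∀ j ≤ p.natDegree, p.coeff (p.natDegree - j) = ε * (starRingEnd ℂ) (p.coeff j))
    {w : ℂ} (hw : p.IsRoot w) (hw0 : w ≠ 0) :
    p.IsRoot (((starRingEnd ℂ) w)⁻¹) := by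
  have hcw : ((starRingEnd ℂ) w) ≠ 0 := by simpa using hw0
  have hrev := reflect_self_eq hε
  have heval := congrArg (eval ((starRingEnd ℂ) w)) hrev
  rw [eval_mul, eval_C, eval_map_conj, Complex.conj_conj,
    eval_reflect (le_refl p.natDegree) hcw] at heval
  have h0 : p.eval w = 0 := hw
  rw [h0, map_zero, mul_zero] at heval
  rcases mul_eq_zero.1 heval with h | h
  · exact absurd h (pow_ne_zero _ hcw)
  · exact h

/-- A polynomial `p` of degree `n` is self-inversive if there is `ε ∈ ℂ` such that
`c_{n-j} = ε ⬝ conj(c_j)` for all `0 ≤ j ≤ n`. -/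
def SelfInversive (p : Polynomial ℂ) : Prop :=
  ∃ ε : ℂ, ∀ j ≤ p.natDegree,
    p.coeff (p.natDegree - j) = ε * (starRingEnd ℂ) (p.coeff j)

/-- Cohn's theorem: all zeros of a (nonconstant) complex polynomial `p` lie on the
unit circle iff `p` is self-inversive and all zeros of `p'` lie in the closed unit disk. -/
theorem cohn_theorem (p : Polynomial ℂ) (hp : 0 < p.natDegree) :
    (∀ z : ℂ, p.IsRoot z → ‖z‖ = 1) ↔
      (SelfInversive p ∧ ∀ z : ℂ, p.derivative.IsRoot z → ‖z‖ ≤ 1) := by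
  constructor
  · intro h
    exact ⟨self_inversive_of_roots hp h, fun z hz => deriv_root_in_disk hp h hz⟩
  · rintro ⟨⟨ε, hε⟩, hd⟩ z hz
    have hp0 : p ≠ 0 := fun h0 => by simp [h0] at hp
    have h1 : ‖z‖ ≤ 1 := no_root_outside hp hε hd hz
    by_contra hne
    have hlt : ‖z‖ < 1 := lt_of_le_of_ne h1 hne
    have hz0 : z ≠ 0 := by
      intro h0
      have hεne : ε ≠ 0 := by
        intro he
        have := eps_unimodular hp hp0 hε
        rw [he] at this
        simp at this
      have hcn : p.coeff p.natDegree ≠ 0 := by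
        rw [coeff_natDegree]; exact leadingCoeff_ne_zero.2 hp0
      have hc0 : p.coeff 0 ≠ 0 := by
        have h2 := hε p.natDegree le_rfl
        rw [Nat.sub_self] at h2
        rw [h2]
        exact mul_ne_zero hεne (by simpa using hcn)
      have h5 : p.eval z = 0 := hz
      rw [h0, ← coeff_zero_eq_eval_zero] at h5
      exact hc0 h5
    have habs0 : 0 < ‖z‖ := norm_pos_iff.mpr hz0
    have hroot2 := root_recip hε hz hz0
    have h3 := no_root_outside hp hε hd hroot2
    rw [norm_inv, Complex.norm_conj] at h3
    have h4 : 1 < (‖z‖)⁻¹ := by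
      rw [lt_inv_comm₀] <;> simp [habs0, hlt]
    linarith
end

section
/- If E is an invertible diagonal matrix with E^{-1} A* E = A^{-1} (A* the entrywise conjugate), then setting F diagonal with F*·F^{-1} = E and B = F^{-1} A F, one has B·B* = I (B is conjugate-involutory). -/
/-- If `E⁻¹ A* E = A⁻¹` (with `A*` the entrywise conjugate) for an invertible diagonal
`E`, and `F` is an invertible diagonal matrix with `F* F⁻¹ = E`, then `B = F⁻¹ A F`
is conjugate-involutory: `B B* = I`. -/
theorem conjugate_involutory_of_diag_similarity {N : ℕ}
    (A : Matrix (Fin N) (Fin N) ℂ) (hAinv : IsUnit A.det)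
    (e f : Fin N → ℂ) (he : ∀ i, e i ≠ 0) (hf : ∀ i, f i ≠ 0)
    (hEF : (Matrix.diagonal f).map (starRingEnd ℂ) * (Matrix.diagonal f)⁻¹ =
      Matrix.diagonal e)
    (hA : (Matrix.diagonal e)⁻¹ * A.map (starRingEnd ℂ) * Matrix.diagonal e = A⁻¹) :
    ((Matrix.diagonal f)⁻¹ * A * Matrix.diagonal f) *
      (((Matrix.diagonal f)⁻¹ * A * Matrix.diagonal f).map (starRingEnd ℂ)) = 1 := by
  set c := starRingEnd ℂ with hc
  have hDinv : (Matrix.diagonal f)⁻¹ = Matrix.diagonal (fun i => (f i)⁻¹) := by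
    apply Matrix.inv_eq_right_inv
    rw [Matrix.diagonal_mul_diagonal]
    have : (fun i => f i * (f i)⁻¹) = fun _ => (1 : ℂ) := by
      funext i; exact mul_inv_cancel₀ (hf i)
    rw [this, Matrix.diagonal_one]
  have hEinv : (Matrix.diagonal e)⁻¹ = Matrix.diagonal (fun i => (e i)⁻¹) := by
    apply Matrix.inv_eq_right_inv
    rw [Matrix.diagonal_mul_diagonal]
    have : (fun i => e i * (e i)⁻¹) = fun _ => (1 : ℂ) := by
      funext i; exact mul_inv_cancel₀ (he i)
    rw [this, Matrix.diagonal_one]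
  have hmapD : (Matrix.diagonal f).map c = Matrix.diagonal (fun i => c (f i)) :=
    Matrix.diagonal_map (map_zero c)
  have hmapDinv : ((Matrix.diagonal f)⁻¹).map c
      = Matrix.diagonal (fun i => (c (f i))⁻¹) := by
    rw [hDinv, Matrix.diagonal_map (map_zero c)]
    simp
  have hEentry : ∀ i, e i = c (f i) * (f i)⁻¹ := by
    intro i
    rw [hmapD, hDinv, Matrix.diagonal_mul_diagonal] at hEF
    have h2 := congrArg (fun M => M i i) hEF
    simpa using h2.symm
  have hEdet : IsUnit (Matrix.diagonal e).det := by
    simpa [Matrix.det_diagonal] using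
      (isUnit_iff_ne_zero.mpr (Finset.prod_ne_zero_iff.mpr fun i _ => he i))
  have hAstar : A.map c = Matrix.diagonal e * A⁻¹ * (Matrix.diagonal e)⁻¹ := by
    have h := congrArg (fun M => Matrix.diagonal e * M * (Matrix.diagonal e)⁻¹) hA
    simp only [← Matrix.mul_assoc] at h
    rw [Matrix.mul_nonsing_inv _ hEdet] at h
    rw [Matrix.mul_assoc _ _ (Matrix.diagonal e)⁻¹,
      Matrix.mul_nonsing_inv _ hEdet] at h
    simpa using h
  rw [Matrix.map_mul, Matrix.map_mul, hAstar, hmapD, hmapDinv, hDinv, hEinv]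
  have key1 : Matrix.diagonal f * Matrix.diagonal (fun i => (c (f i))⁻¹)
      * Matrix.diagonal e = 1 := by
    rw [Matrix.diagonal_mul_diagonal, Matrix.diagonal_mul_diagonal]
    have hfun : (fun i => f i * (c (f i))⁻¹ * e i) = fun _ => (1 : ℂ) := by
      funext i
      have hcf : c (f i) ≠ 0 := by simp [hc, hf i]
      rw [hEentry i]; field_simp
      exact div_self (hf i)
    rw [hfun, Matrix.diagonal_one]
  have key2 : Matrix.diagonal (fun i => (f i)⁻¹)
      * Matrix.diagonal (fun i => (e i)⁻¹)
      * Matrix.diagonal (fun i => c (f i)) = 1 := by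
    rw [Matrix.diagonal_mul_diagonal, Matrix.diagonal_mul_diagonal]
    have hfun : (fun i => (f i)⁻¹ * (e i)⁻¹ * c (f i)) = fun _ => (1 : ℂ) := by
      funext i
      have hcf : c (f i) ≠ 0 := by simp [hc, hf i]
      rw [hEentry i]
      field_simp
      exact div_self (hf i)
    rw [hfun, Matrix.diagonal_one]
  calc Matrix.diagonal (fun i => (f i)⁻¹) * A * Matrix.diagonal f *
        (Matrix.diagonal (fun i => (c (f i))⁻¹) *
          (Matrix.diagonal e * A⁻¹ * Matrix.diagonal (fun i => (e i)⁻¹)) *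
          Matrix.diagonal (fun i => c (f i)))
      = Matrix.diagonal (fun i => (f i)⁻¹) * (A *
        (Matrix.diagonal f * Matrix.diagonal (fun i => (c (f i))⁻¹) * Matrix.diagonal e)
        * (A⁻¹ * (Matrix.diagonal (fun i => (e i)⁻¹) * Matrix.diagonal (fun i => c (f i))))) := by
        simp only [Matrix.mul_assoc]
    _ = 1 := by
        rw [key1, Matrix.mul_one, ← Matrix.mul_assoc A,
          Matrix.mul_nonsing_inv _ hAinv, Matrix.one_mul, ← Matrix.mul_assoc, key2]
end
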